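/- Let C be a finite set of vectors in ℝ^m with |x|² = 4 for all x ∈ C and ⟨x, x'⟩ ≤ 2 for all distinct x, x' ∈ C. Let S_1, …, S_N be pairwise disjoint subsets of C such that within each S_i all distinct pairs satisfy ⟨x, x'⟩ ≤ 1. Let T_1, …, T_N be pairwise disjoint finite sets of unit vectors in ℝ^d such that ⟨y, y'⟩ ≤ 1/2 for all distinct y, y' in T_1 ∪ ⋯ ∪ T_N, and ⟨y, y'⟩ ≤ −1/2 for all distinct y, y' lying in the same T_i. Define K ⊂ ℝ^m × ℝ^d = ℝ^{m+d} by K = {(x, 0) : x ∈ C ∖ (S_1 ∪ ⋯ ∪ S_N)} ∪ ⋃_{i=1}^N {(√(2/3)·x, √(4/3)·y) : x ∈ S_i, y ∈ T_i}. Then every element of K has squared norm 4, ⟨u, v⟩ ≤ 2 for all distinct u, v ∈ K, and K has exactly |C| + Σ_{i=1}^N (|T_i| − 1)·|S_i| elements. -/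

import Mathlib

open scoped RealInnerProductSpace

lemma aux_ncard_iUnion {α : Type*} : ∀ {n : ℕ} (B : Fin n → Set α),
    (∀ i, (B i).Finite) → (∀ i j, i ≠ j → Disjoint (B i) (B j)) →
    (⋃ i, B i).ncard = ∑ i, (B i).ncard := by
  intro n
  induction n with
  | zero => simp
  | succ n ih =>
    intro B hfin hdisj
    have hU : (⋃ i, B i) = B 0 ∪ ⋃ i : Fin n, B i.succ := by
      ext p; simp [Fin.exists_fin_succ]
    rw [hU, Fin.sum_univ_succ,
      Set.ncard_union_eq (Set.disjoint_iUnion_right.mpr fun i =>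
        hdisj 0 i.succ (Fin.succ_ne_zero i).symm) (hfin 0)
        (Set.finite_iUnion fun i => hfin i.succ),
      ih (fun i => B i.succ) (fun i => hfin i.succ)
        (fun i j hij => hdisj i.succ j.succ (fun h => hij (Fin.succ_injective _ h)))]


theorem statement17 {m d : ℕ} (C : Set (EuclideanSpace ℝ (Fin m))) (hCfin : C.Finite)
    (hCnorm : ∀ x ∈ C, ‖x‖ ^ 2 = 4)
    (hCip : ∀ x ∈ C, ∀ x' ∈ C, x ≠ x' → ⟪x, x'⟫ ≤ 2)
    (N : ℕ) (S : Fin N → Set (EuclideanSpace ℝ (Fin m)))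
    (hSC : ∀ i, S i ⊆ C)
    (hSdisj : ∀ i j, i ≠ j → Disjoint (S i) (S j))
    (hSip : ∀ i, ∀ x ∈ S i, ∀ x' ∈ S i, x ≠ x' → ⟪x, x'⟫ ≤ 1)
    (T : Fin N → Set (EuclideanSpace ℝ (Fin d)))
    (hTfin : ∀ i, (T i).Finite)
    (hTdisj : ∀ i j, i ≠ j → Disjoint (T i) (T j))
    (hTunit : ∀ i, ∀ y ∈ T i, ‖y‖ = 1)
    (hTip : ∀ i j, ∀ y ∈ T i, ∀ y' ∈ T j, y ≠ y' → ⟪y, y'⟫ ≤ 1 / 2)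
    (hTin : ∀ i, ∀ y ∈ T i, ∀ y' ∈ T i, y ≠ y' → ⟪y, y'⟫ ≤ -(1 / 2)) :
    let K : Set (EuclideanSpace ℝ (Fin m) × EuclideanSpace ℝ (Fin d)) :=
      {p | ∃ x ∈ C \ (⋃ i, S i), p = (x, 0)} ∪
      ⋃ i, {p | ∃ x ∈ S i, ∃ y ∈ T i,
        p = (Real.sqrt (2 / 3) • x, Real.sqrt (4 / 3) • y)}
    (∀ u ∈ K, ‖u.1‖ ^ 2 + ‖u.2‖ ^ 2 = 4) ∧
    (∀ u ∈ K, ∀ v ∈ K, u ≠ v → ⟪u.1, v.1⟫ + ⟪u.2, v.2⟫ ≤ 2) ∧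
    (K.ncard : ℤ) = (C.ncard : ℤ) + ∑ i, (((T i).ncard : ℤ) - 1) * ((S i).ncard : ℤ) := by
  intro K
  set c : ℝ := Real.sqrt (2 / 3) with hc
  set e : ℝ := Real.sqrt (4 / 3) with he
  have hc2 : c ^ 2 = 2 / 3 := Real.sq_sqrt (by norm_num)
  have he2 : e ^ 2 = 4 / 3 := Real.sq_sqrt (by norm_num)
  have hc0 : (0:ℝ) < c := Real.sqrt_pos.mpr (by norm_num)
  have he0 : (0:ℝ) < e := Real.sqrt_pos.mpr (by norm_num)
  have hc1 : c ≤ 1 := by nlinarith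
  have hmem : ∀ u, u ∈ K ↔ ((∃ x, (x ∈ C ∧ x ∉ ⋃ i, S i) ∧ u = (x, 0)) ∨
      ∃ i, ∃ x ∈ S i, ∃ y ∈ T i, u = (c • x, e • y)) := by
    intro u
    simp only [K, Set.mem_union, Set.mem_setOf_eq, Set.mem_iUnion, Set.mem_diff, ← hc, ← he]
  have hnorm : ∀ u ∈ K, ‖u.1‖ ^ 2 + ‖u.2‖ ^ 2 = 4 := by
    intro u hu
    rcases (hmem u).mp hu with ⟨x, ⟨hxC, _⟩, rfl⟩ | ⟨i, x, hx, y, hy, rfl⟩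
    · simp [hCnorm x hxC]
    · simp only [norm_smul, Real.norm_eq_abs, mul_pow, sq_abs, hc2, he2,
        hCnorm x (hSC i hx), hTunit i y hy]
      norm_num
  refine ⟨hnorm, ?_, ?_⟩
  · -- inner products
    intro u hu v hv huv
    rcases (hmem u).mp hu with ⟨x, ⟨hxC, hxS⟩, rfl⟩ | ⟨i, x, hx, y, hy, rfl⟩ <;>
      rcases (hmem v).mp hv with ⟨x', ⟨hx'C, hx'S⟩, rfl⟩ | ⟨j, x', hx', y', hy', rfl⟩
    · have hxx : x ≠ x' := fun h => huv (by rw [h])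
      simpa using hCip x hxC x' hx'C hxx
    · have hxx : x ≠ x' := fun h => hxS (Set.mem_iUnion.mpr ⟨j, h ▸ hx'⟩)
      have h2 := hCip x hxC x' (hSC j hx') hxx
      simp only [real_inner_smul_right, inner_zero_left, add_zero]
      nlinarith
    · have hxx : x' ≠ x := fun h => hx'S (Set.mem_iUnion.mpr ⟨i, h ▸ hx⟩)
      have h2 := hCip x' hx'C x (hSC i hx) hxx
      simp only [real_inner_smul_left, inner_zero_right, add_zero]
      rw [real_inner_comm]
      nlinarith
    · simp only [real_inner_smul_left, real_inner_smul_right, ← mul_assoc,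
        ← sq, hc2, he2]
      by_cases hxx : x = x'
      · -- then i = j and y ≠ y'
        have hij : i = j := by
          by_contra hij
          exact (hSdisj i j hij).ne_of_mem hx hx' hxx
        subst hij; subst hxx
        have hyy : y ≠ y' := by
          rintro rfl; exact huv rfl
        have h1 : ⟪x, x⟫ = 4 := by
          rw [real_inner_self_eq_norm_sq]; exact hCnorm x (hSC i hx)
        have h2 := hTin i y hy y' hy' hyy
        nlinarith
      · have h1 := hCip x (hSC i hx) x' (hSC j hx') hxx
        by_cases hyy : y = y'
        · have hij : i = j := by
            by_contra hij
            exact (hTdisj i j hij).ne_of_mem hy hy' hyy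
          subst hij
          have h2 := hSip i x hx x' hx' hxx
          have h3 : ⟪y, y'⟫ = 1 := by
            rw [hyy, real_inner_self_eq_norm_sq, hTunit i y' hy']; norm_num
          nlinarith
        · have h2 := hTip i j y hy y' hy' hyy
          nlinarith
  · -- cardinality
    classical
    set U := ⋃ i, S i with hU
    have hUF : U ⊆ C := Set.iUnion_subset hSC
    set f : (EuclideanSpace ℝ (Fin m) × EuclideanSpace ℝ (Fin d)) →
        (EuclideanSpace ℝ (Fin m) × EuclideanSpace ℝ (Fin d)) :=
      fun p => (c • p.1, e • p.2) with hf
    have hfinj : Function.Injective f := by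
      rintro ⟨a, b⟩ ⟨a', b'⟩ h
      simp only [hf, Prod.mk.injEq] at h ⊢
      exact ⟨smul_right_injective _ hc0.ne' h.1, smul_right_injective _ he0.ne' h.2⟩
    have hA : {p : EuclideanSpace ℝ (Fin m) × EuclideanSpace ℝ (Fin d) |
        ∃ x ∈ C \ U, p = (x, 0)} =
        (fun x => (x, (0 : EuclideanSpace ℝ (Fin d)))) '' (C \ U) := by
      ext p
      simp only [Set.mem_setOf_eq, Set.mem_image, eq_comm]
    have hB : ∀ i, {p : EuclideanSpace ℝ (Fin m) × EuclideanSpace ℝ (Fin d) |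
        ∃ x ∈ S i, ∃ y ∈ T i, p = (c • x, e • y)} = f '' (S i ×ˢ T i) := by
      intro i; ext p
      simp only [Set.mem_setOf_eq, Set.mem_image, Set.mem_prod, Prod.exists, hf]
      constructor
      · rintro ⟨x, hx, y, hy, rfl⟩; exact ⟨x, y, ⟨hx, hy⟩, rfl⟩
      · rintro ⟨x, y, ⟨hx, hy⟩, rfl⟩; exact ⟨x, hx, y, hy, rfl⟩
    have hSfin : ∀ i, (S i).Finite := fun i => hCfin.subset (hSC i)
    have hBfin : ∀ i, (f '' (S i ×ˢ T i)).Finite :=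
      fun i => (((hSfin i).prod (hTfin i)).image f)
    have hAfin : ((fun x => (x, (0 : EuclideanSpace ℝ (Fin d)))) '' (C \ U)).Finite :=
      (hCfin.diff).image _
    have hsnd : ∀ i y, y ∈ T i → e • y ≠ 0 := by
      intro i y hy h
      have : y = 0 := by
        rcases smul_eq_zero.mp h with h' | h'
        · exact absurd h' he0.ne'
        · exact h'
      rw [this] at hy
      have := hTunit i 0 hy
      simp at this
    have hdisjAB : Disjoint ((fun x => (x, (0 : EuclideanSpace ℝ (Fin d)))) '' (C \ U))
        (⋃ i, f '' (S i ×ˢ T i)) := by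
      rw [Set.disjoint_iUnion_right]
      intro i
      rw [Set.disjoint_left]
      rintro p ⟨x, _, rfl⟩ ⟨⟨x', y'⟩, ⟨_, hy'⟩, hp⟩
      have : e • y' = (0 : EuclideanSpace ℝ (Fin d)) := congrArg Prod.snd hp
      exact hsnd i y' hy' this
    have hBdisj : ∀ i j, i ≠ j → Disjoint (f '' (S i ×ˢ T i)) (f '' (S j ×ˢ T j)) := by
      intro i j hij
      rw [Set.disjoint_left]
      rintro p ⟨⟨x, y⟩, ⟨_, hy⟩, rfl⟩ ⟨⟨x', y'⟩, ⟨_, hy'⟩, hp⟩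
      have hyy : y' = y := congrArg Prod.snd (hfinj hp)
      exact (hTdisj i j hij).ne_of_mem hy hy' (hyy ▸ rfl)
    have hK : K = ((fun x => (x, (0 : EuclideanSpace ℝ (Fin d)))) '' (C \ U)) ∪
        ⋃ i, f '' (S i ×ˢ T i) := by
      simp only [K, ← hU, ← hc, ← he, hA]
      exact congrArg _ (Set.iUnion_congr hB)
    have hprod : ∀ i, (f '' (S i ×ˢ T i)).ncard = (S i).ncard * (T i).ncard := by
      intro i
      rw [Set.ncard_image_of_injective _ hfinj, ← Nat.card_coe_set_eq,
        Nat.card_congr (Equiv.Set.prod _ _), Nat.card_prod,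
        Nat.card_coe_set_eq, Nat.card_coe_set_eq]
    have h1 : K.ncard = (C \ U).ncard + ∑ i, (S i).ncard * (T i).ncard := by
      rw [hK, Set.ncard_union_eq hdisjAB hAfin (Set.finite_iUnion hBfin),
        Set.ncard_image_of_injective _ (fun a b h => congrArg Prod.fst h),
        aux_ncard_iUnion _ hBfin hBdisj]
      exact congrArg _ (Finset.sum_congr rfl fun i _ => hprod i)
    have hUcard : (U.ncard : ℤ) = ∑ i, ((S i).ncard : ℤ) := by
      rw [hU, aux_ncard_iUnion S hSfin hSdisj]
      push_cast
      rfl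
    have hdiff : (((C \ U).ncard : ℤ)) = (C.ncard : ℤ) - U.ncard :=
      Set.cast_ncard_sdiff hUF hCfin
    have hsum : ∑ i, (((T i).ncard : ℤ) - 1) * ((S i).ncard : ℤ) =
        ∑ i, ((S i).ncard : ℤ) * ((T i).ncard : ℤ) - ∑ i, ((S i).ncard : ℤ) := by
      rw [← Finset.sum_sub_distrib]
      exact Finset.sum_congr rfl fun i _ => by ring
    rw [h1]
    push_cast
    rw [hdiff, hUcard, hsum]
    ring
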